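/- Let ξ_j be independent standard Gaussians and λ_j positive reals satisfying c j² ≤ λ_j ≤ C j² for 0 < c ≤ C. If 1/2 < α ≤ 3/2, then ∑_{j≥1} λ_j^{1−α} ξ_j² = ∞ almost surely. -/

import Mathlib

open MeasureTheory ProbabilityTheory Real Filter Topology

/-- Integrability of `x ↦ x^2` under the standard Gaussian. -/
lemma wm_integrable_sq_gaussian : Integrable (fun x : ℝ => x ^ 2) (gaussianReal 0 1) := by
  rw [gaussianReal_of_var_ne_zero 0 one_ne_zero]
  rw [integrable_withDensity_iff (measurable_gaussianPDF 0 1)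
    (Filter.Eventually.of_forall fun x => ENNReal.ofReal_lt_top)]
  have heq : (fun x : ℝ => x ^ 2 * (gaussianPDF 0 1 x).toReal)
      = fun x : ℝ => (Real.sqrt (2 * π))⁻¹ * (x ^ 2 * Real.exp (-(1/2) * x ^ 2)) := by
    funext x
    rw [gaussianPDF, ENNReal.toReal_ofReal (gaussianPDFReal_nonneg 0 1 x), gaussianPDFReal]
    simp only [NNReal.coe_one, mul_one, sub_zero]
    rw [show -x ^ 2 / 2 = -(1/2) * x ^ 2 by ring]
    ring
  rw [heq]
  have hint2 : Integrable (fun x : ℝ => x ^ 2 * Real.exp (-(1/2) * x ^ 2)) := by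
    have := integrable_rpow_mul_exp_neg_mul_sq (by norm_num : (0:ℝ) < 1/2)
      (s := 2) (by norm_num)
    simpa [Real.rpow_two] using this
  exact hint2.const_mul _

/-- Positivity of the second moment of the standard Gaussian. -/
lemma wm_integral_sq_gaussian_pos : 0 < ∫ x, x ^ 2 ∂(gaussianReal 0 1) := by
  rw [integral_pos_iff_support_of_nonneg_ae
    (Filter.Eventually.of_forall fun x => sq_nonneg x) wm_integrable_sq_gaussian]
  have hsupp : Function.support (fun x : ℝ => x ^ 2) = {(0:ℝ)}ᶜ := by
    ext x; simp [Function.mem_support, pow_eq_zero_iff]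
  rw [hsupp]
  have h0 : (gaussianReal 0 1) {(0:ℝ)} = 0 :=
    gaussianReal_absolutelyContinuous 0 one_ne_zero Real.volume_singleton
  have := measure_compl (measurableSet_singleton (0:ℝ))
    (measure_ne_top (gaussianReal 0 1) _)
  rw [this, h0, measure_univ]
  simp

/-- If the Cesàro averages of a nonnegative sequence converge to a positive limit,
then `∑ a j / (j+1)` diverges. -/
lemma wm_not_summable_div {a : ℕ → ℝ} (ha : ∀ j, 0 ≤ a j) {L : ℝ} (hL : 0 < L)
    (h : Tendsto (fun n : ℕ => (∑ j ∈ Finset.range n, a j) / n) atTop (𝓝 L)) :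
    ¬ Summable (fun j : ℕ => a j / ((j : ℝ) + 1)) := by
  intro hs
  set f : ℕ → ℝ := fun j => a j / ((j : ℝ) + 1) with hf
  set S : ℕ → ℝ := fun n => ∑ j ∈ Finset.range n, a j with hS
  set s : ℕ → ℝ := fun n => ∑ j ∈ Finset.range n, f j with hsdef
  have h2n : Tendsto (fun n : ℕ => (2 * n : ℕ)) atTop atTop :=
    tendsto_atTop_atTop_of_monotone (fun m n hmn => by omega) (fun b => ⟨b, by omega⟩)
  -- partial sums of f converge
  have hpartial : Tendsto s atTop (𝓝 (∑' j, f j)) := hs.hasSum.tendsto_sum_nat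
  have hdiff : Tendsto (fun n : ℕ => s (2 * n) - s n) atTop (𝓝 0) := by
    have := (hpartial.comp h2n).sub hpartial
    simpa using this
  -- the comparison sequence tends to L/2
  have hg : Tendsto (fun n : ℕ => S (2 * n) / ((2 * n : ℕ) : ℝ) - (S n / n) / 2)
      atTop (𝓝 (L - L / 2)) := ((h.comp h2n).sub (h.div_const 2))
  have hLL : L - L / 2 = L / 2 := by ring
  rw [hLL] at hg
  -- eventual comparison
  have hev : ∀ᶠ n : ℕ in atTop,
      S (2 * n) / ((2 * n : ℕ) : ℝ) - (S n / n) / 2 ≤ s (2 * n) - s n := by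
    filter_upwards [eventually_ge_atTop 1] with n hn
    have hnpos : (0:ℝ) < n := by exact_mod_cast hn
    have h2npos : (0:ℝ) < ((2 * n : ℕ) : ℝ) := by positivity
    have hle : n ≤ 2 * n := by omega
    have hsum : s (2 * n) - s n = ∑ j ∈ Finset.Ico n (2 * n), f j := by
      rw [hsdef]
      rw [Finset.sum_Ico_eq_sub _ hle]
    have hSsum : S (2 * n) - S n = ∑ j ∈ Finset.Ico n (2 * n), a j := by
      rw [hS]
      rw [Finset.sum_Ico_eq_sub _ hle]
    have hterm : ∀ j ∈ Finset.Ico n (2 * n),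
        a j / ((2 * n : ℕ) : ℝ) ≤ f j := by
      intro j hj
      rw [Finset.mem_Ico] at hj
      have hj1 : (0:ℝ) < (j : ℝ) + 1 := by positivity
      have hle2 : ((j : ℝ) + 1) ≤ ((2 * n : ℕ) : ℝ) := by
        have : j + 1 ≤ 2 * n := hj.2
        exact_mod_cast this
      exact div_le_div_of_nonneg_left (ha j) hj1 hle2
    have hsum_le : (∑ j ∈ Finset.Ico n (2 * n), a j) / ((2 * n : ℕ) : ℝ)
        ≤ ∑ j ∈ Finset.Ico n (2 * n), f j := by
      rw [Finset.sum_div]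
      exact Finset.sum_le_sum hterm
    have hcast : (S n / n) / 2 = S n / ((2 * n : ℕ) : ℝ) := by
      rw [div_div]
      congr 1
      push_cast
      ring
    rw [hsum, hcast]
    calc S (2 * n) / ((2 * n : ℕ) : ℝ) - S n / ((2 * n : ℕ) : ℝ)
        = (S (2 * n) - S n) / ((2 * n : ℕ) : ℝ) := by ring
      _ = (∑ j ∈ Finset.Ico n (2 * n), a j) / ((2 * n : ℕ) : ℝ) := by rw [hSsum]
      _ ≤ _ := hsum_le
  have : L / 2 ≤ 0 := le_of_tendsto_of_tendsto hg hdiff hev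
  linarith

/-- If `ξ_j` are independent standard Gaussians and `λ_j ≍ j²` (Weyl asymptotics),
then for `1/2 < α ≤ 3/2` the series `∑_j λ_j^{1-α} ξ_j²` diverges almost surely.
(Indices shifted: `lam j` corresponds to the `(j+1)`-th eigenvalue.) -/
theorem whittle_matern_not_in_H1_series_diverges
    {Ω : Type*} [MeasureSpace Ω] [IsProbabilityMeasure (ℙ : Measure Ω)]
    (ξ : ℕ → Ω → ℝ) (hmeas : ∀ j, Measurable (ξ j))
    (hindep : iIndepFun ξ ℙ)
    (hdist : ∀ j, Measure.map (ξ j) ℙ = gaussianReal 0 1)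
    (lam : ℕ → ℝ) (c C : ℝ) (hc : 0 < c) (hcC : c ≤ C)
    (hlow : ∀ j : ℕ, c * ((j : ℝ) + 1) ^ 2 ≤ lam j)
    (hupp : ∀ j : ℕ, lam j ≤ C * ((j : ℝ) + 1) ^ 2)
    (α : ℝ) (hα : 1 / 2 < α) (hα' : α ≤ 3 / 2) :
    ∀ᵐ ω ∂ℙ, ∑' j : ℕ, ENNReal.ofReal ((lam j) ^ (1 - α) * ξ j ω ^ 2) = ⊤ := by
  have hC : 0 < C := lt_of_lt_of_le hc hcC
  set t : ℝ := 1 - α with ht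
  have ht1 : -1 ≤ 2 * t := by rw [ht]; linarith
  -- uniform lower bound on the weights
  set K : ℝ := min (c ^ t) (C ^ t) with hK
  have hKpos : 0 < K := lt_min (Real.rpow_pos_of_pos hc t) (Real.rpow_pos_of_pos hC t)
  have hweight : ∀ j : ℕ, K * (((j : ℝ) + 1))⁻¹ ≤ lam j ^ t := by
    intro j
    set j1 : ℝ := (j : ℝ) + 1 with hj1def
    have hj1 : (1:ℝ) ≤ j1 := le_add_of_nonneg_left (Nat.cast_nonneg j)
    have hj1pos : (0:ℝ) < j1 := lt_of_lt_of_le one_pos hj1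
    have hlampos : 0 < lam j := lt_of_lt_of_le (by positivity) (hlow j)
    have hpowinv : j1 ^ (-1 : ℝ) ≤ j1 ^ (2 * t) :=
      Real.rpow_le_rpow_of_exponent_le hj1 ht1
    have hsq : (j1 ^ 2 : ℝ) ^ t = j1 ^ (2 * t) := by
      rw [← Real.rpow_natCast j1 2, ← Real.rpow_mul hj1pos.le]
      norm_num
    rcases le_or_gt 0 t with htpos | htneg
    · -- use the lower bound
      have h1 : (c * j1 ^ 2) ^ t ≤ lam j ^ t :=
        Real.rpow_le_rpow (by positivity) (hlow j) htpos
      have h2 : (c * j1 ^ 2) ^ t = c ^ t * (j1 ^ 2) ^ t :=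
        Real.mul_rpow hc.le (by positivity)
      calc K * j1⁻¹ ≤ c ^ t * j1⁻¹ := by
            apply mul_le_mul_of_nonneg_right (min_le_left _ _) (by positivity)
        _ = c ^ t * j1 ^ (-1 : ℝ) := by rw [Real.rpow_neg_one]
        _ ≤ c ^ t * j1 ^ (2 * t) := by
            apply mul_le_mul_of_nonneg_left hpowinv (Real.rpow_nonneg hc.le t)
        _ = (c * j1 ^ 2) ^ t := by rw [h2, hsq]
        _ ≤ lam j ^ t := h1
    · -- use the upper bound
      have h1 : (C * j1 ^ 2) ^ t ≤ lam j ^ t :=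
        Real.rpow_le_rpow_of_nonpos hlampos (hupp j) htneg.le
      have h2 : (C * j1 ^ 2) ^ t = C ^ t * (j1 ^ 2) ^ t :=
        Real.mul_rpow hC.le (by positivity)
      calc K * j1⁻¹ ≤ C ^ t * j1⁻¹ := by
            apply mul_le_mul_of_nonneg_right (min_le_right _ _) (by positivity)
        _ = C ^ t * j1 ^ (-1 : ℝ) := by rw [Real.rpow_neg_one]
        _ ≤ C ^ t * j1 ^ (2 * t) := by
            apply mul_le_mul_of_nonneg_left hpowinv (Real.rpow_nonneg hC.le t)
        _ = (C * j1 ^ 2) ^ t := by rw [h2, hsq]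
        _ ≤ lam j ^ t := h1
  -- SLLN for the squares
  set X : ℕ → Ω → ℝ := fun j ω => ξ j ω ^ 2 with hX
  have hmeasX : ∀ j, Measurable (X j) := fun j => (hmeas j).pow_const 2
  have hintX : Integrable (X 0) ℙ := by
    have : Integrable (fun x : ℝ => x ^ 2) (Measure.map (ξ 0) ℙ) := by
      rw [hdist 0]; exact wm_integrable_sq_gaussian
    exact (integrable_map_measure
      (measurable_id.pow_const 2 : Measurable fun x : ℝ => x ^ 2).aestronglyMeasurable
      (hmeas 0).aemeasurable).mp this
  have hpair : Pairwise (Function.onFun (IndepFun · · ℙ) X) := by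
    intro i j hij
    exact (hindep.indepFun hij).comp (measurable_id.pow_const 2) (measurable_id.pow_const 2)
  have hident : ∀ i, IdentDistrib (X i) (X 0) ℙ ℙ := by
    intro i
    have hb : IdentDistrib (ξ i) (ξ 0) ℙ ℙ :=
      ⟨(hmeas i).aemeasurable, (hmeas 0).aemeasurable, by rw [hdist i, hdist 0]⟩
    exact hb.comp (measurable_id.pow_const 2)
  have hslln := strong_law_ae_real X hintX hpair hident
  -- identify the mean and show it is positive
  have hmean : 0 < ℙ[X 0] := by
    have : ℙ[X 0] = ∫ x, x ^ 2 ∂(gaussianReal 0 1) := by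
      rw [← hdist 0]
      exact (integral_map (hmeas 0).aemeasurable
        (measurable_id.pow_const 2 : Measurable fun x : ℝ => x ^ 2).aestronglyMeasurable).symm
    rw [this]
    exact wm_integral_sq_gaussian_pos
  filter_upwards [hslln] with ω hω
  -- divergence of ∑ ξ_j² / (j+1)
  have hnotsum : ¬ Summable (fun j : ℕ => X j ω / ((j : ℝ) + 1)) :=
    wm_not_summable_div (fun j => sq_nonneg _) hmean hω
  have hnotsumK : ¬ Summable (fun j : ℕ => K * (X j ω / ((j : ℝ) + 1))) := by
    intro hcon
    exact hnotsum (by simpa [hKpos.ne'] using hcon.const_smul K⁻¹)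
  -- the ENNReal series with the smaller terms is ⊤
  have htop : ∑' j : ℕ, ENNReal.ofReal (K * (X j ω / ((j : ℝ) + 1))) = ⊤ := by
    by_contra hne
    apply hnotsumK
    have := ENNReal.summable_toReal hne
    refine this.congr fun j => ?_
    rw [ENNReal.toReal_ofReal]
    positivity
  refine top_le_iff.mp ?_
  rw [← htop]
  apply ENNReal.tsum_le_tsum
  intro j
  apply ENNReal.ofReal_le_ofReal
  have := hweight j
  calc K * (X j ω / ((j : ℝ) + 1)) = (K * ((j : ℝ) + 1)⁻¹) * ξ j ω ^ 2 := by
        rw [hX]; ring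
    _ ≤ lam j ^ t * ξ j ω ^ 2 := mul_le_mul_of_nonneg_right this (sq_nonneg _)
    _ = lam j ^ (1 - α) * ξ j ω ^ 2 := by rw [ht]
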